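/- arXiv:1601.05450 — 2 statements merged into one kernel-verified Lean document; each statement's English description precedes it below -/
import Mathlib

section
/- Let F be a nonarchimedean local field, ψ an additive character of F trivial on the ring of integers O but nontrivial on p⁻¹. Fix m ≥ 1 and let J_m = d^m K^m d^{-m} as above, with Iwahori-type decomposition J_m = N̄_m A_m N_m where N_m = N_n ∩ J_m, A_m = A_n ∩ J_m, N̄_m = N̄_n ∩ J_m. Define ψ_m on J_m by ψ_m(j) = ψ(Σ_{i=1}^{n-1} (n_j)_{i,i+1}), where j = b̄_j n_j with b̄_j ∈ N̄_m A_m and n_j ∈ N_m. Then for all j ∈ J_m, ψ_m(ω_n ᵗj⁻¹ ω_n) = ψ_m(j)⁻¹. -/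
open Matrix

/-- The `k × k` antidiagonal permutation matrix `ω_k`. -/
def antidiag (F : Type*) [Zero F] [One F] (k : ℕ) : Matrix (Fin k) (Fin k) F :=
  Matrix.of fun i j => if (i : ℕ) + (j : ℕ) = k - 1 then 1 else 0

/-- Upper triangular unipotent matrix. -/
def IsUpperUnip {F : Type*} [Zero F] [One F] {k : ℕ} (M : Matrix (Fin k) (Fin k) F) : Prop :=
  (∀ i j : Fin k, j < i → M i j = 0) ∧ ∀ i, M i i = 1

/-- `d^s` where `d = diag(1, p², p⁴, ..., p^{2n-2})`. -/
noncomputable def dpow (p : ℕ) [Fact p.Prime] (n : ℕ) (s : ℤ) :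
    Matrix (Fin n) (Fin n) ℚ_[p] :=
  Matrix.diagonal fun i => (p : ℚ_[p]) ^ (2 * (i : ℤ) * s)

/-- The principal congruence subgroup `K^m = I + M_n(p^m)`. -/
def Km (p : ℕ) [Fact p.Prime] (n m : ℕ) : Set (Matrix (Fin n) (Fin n) ℚ_[p]) :=
  {g | ∀ i j, ‖g i j - (1 : Matrix (Fin n) (Fin n) ℚ_[p]) i j‖ ≤ (p : ℝ) ^ (-(m : ℤ))}

/-- `J_m = d^m K^m d^{-m}`. -/
noncomputable def Jm (p : ℕ) [Fact p.Prime] (n m : ℕ) :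
    Set (Matrix (Fin n) (Fin n) ℚ_[p]) :=
  (fun k => dpow p n (m : ℤ) * k * dpow p n (-(m : ℤ))) '' Km p n m

section AuxAntidiag

variable {F : Type*} [Field F] {k : ℕ}

lemma antidiag_mul_apply (A : Matrix (Fin k) (Fin k) F) (i j : Fin k) :
    (antidiag F k * A) i j = A i.rev j := by
  rw [Matrix.mul_apply, Finset.sum_eq_single_of_mem i.rev (Finset.mem_univ _)]
  · have h : (i : ℕ) + (k - ((i : ℕ) + 1)) = k - 1 := by have := i.isLt; omega
    simp [antidiag, Fin.val_rev, h]
  · intro b _ hb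
    have h : ¬((i : ℕ) + (b : ℕ) = k - 1) := by
      intro h
      exact hb (Fin.ext (by have := i.isLt; have := b.isLt; simp [Fin.val_rev]; omega))
    simp [antidiag, h]

lemma mul_antidiag_apply (A : Matrix (Fin k) (Fin k) F) (i j : Fin k) :
    (A * antidiag F k) i j = A i j.rev := by
  rw [Matrix.mul_apply, Finset.sum_eq_single_of_mem j.rev (Finset.mem_univ _)]
  · have h : (k - ((j : ℕ) + 1)) + (j : ℕ) = k - 1 := by have := j.isLt; omega
    simp [antidiag, Fin.val_rev, h]
  · intro b _ hb
    have h : ¬((b : ℕ) + (j : ℕ) = k - 1) := by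
      intro h
      exact hb (Fin.ext (by have := j.isLt; have := b.isLt; simp [Fin.val_rev]; omega))
    simp [antidiag, h]

lemma antidiag_conj_apply (A : Matrix (Fin k) (Fin k) F) (i j : Fin k) :
    (antidiag F k * A * antidiag F k) i j = A i.rev j.rev := by
  rw [mul_antidiag_apply, antidiag_mul_apply]

lemma antidiag_mul_antidiag : antidiag F k * antidiag F k = 1 := by
  ext i j
  rw [antidiag_mul_apply]
  rcases eq_or_ne i j with rfl | h
  · have h : (k - ((i : ℕ) + 1)) + (i : ℕ) = k - 1 := by have := i.isLt; omega
    simp [antidiag, Fin.val_rev, h, Matrix.one_apply]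
  · have h2 : ¬((k - ((i : ℕ) + 1)) + (j : ℕ) = k - 1) := by
      intro hc
      exact h (Fin.ext (by have := i.isLt; have := j.isLt; omega))
    simp [antidiag, Fin.val_rev, h2, Matrix.one_apply, h]

end AuxAntidiag

section Tri

variable {F : Type*} [Field F] {k : ℕ}

lemma upT_det (M : Matrix (Fin k) (Fin k) F) (hup : ∀ i j : Fin k, j < i → M i j = 0) :
    M.det = ∏ i, M i i :=
  Matrix.det_of_upperTriangular (fun i j h => hup i j h)

lemma upT_isUnit_det (M : Matrix (Fin k) (Fin k) F)
    (hup : ∀ i j : Fin k, j < i → M i j = 0) (hd : ∀ i, M i i ≠ 0) : IsUnit M.det := by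
  rw [upT_det M hup]
  exact isUnit_iff_ne_zero.mpr (Finset.prod_ne_zero_iff.mpr fun i _ => hd i)

lemma upT_inv (M : Matrix (Fin k) (Fin k) F)
    (hup : ∀ i j : Fin k, j < i → M i j = 0) (hd : ∀ i, M i i ≠ 0) :
    ∀ i j : Fin k, j < i → M⁻¹ i j = 0 := by
  have hMW : M * M⁻¹ = 1 := Matrix.mul_nonsing_inv M (upT_isUnit_det M hup hd)
  have key : ∀ d : ℕ, ∀ i j : Fin k, k ≤ (i : ℕ) + 1 + d → j < i → M⁻¹ i j = 0 := by
    intro d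
    induction d using Nat.strong_induction_on with
    | _ d ih =>
      intro i j hd' hij
      have h1 : (M * M⁻¹) i j = (1 : Matrix (Fin k) (Fin k) F) i j := by rw [hMW]
      rw [Matrix.mul_apply, Matrix.one_apply_ne (ne_of_gt hij),
        Finset.sum_eq_single_of_mem i (Finset.mem_univ _)] at h1
      · exact (mul_eq_zero.mp h1).resolve_left (hd i)
      · intro b _ hb
        rcases lt_or_gt_of_ne hb with hbi | hbi
        · rw [hup i b hbi, zero_mul]
        · have hkb : (b : ℕ) < k := b.isLt
          have : M⁻¹ b j = 0 := by
            refine ih (k - 1 - (b : ℕ)) (by omega) b j (by omega) (lt_trans hij hbi)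
          rw [this, mul_zero]
  intro i j hij
  exact key (k - 1 - (i : ℕ)) i j (by have := i.isLt; omega) hij

lemma unip_inv_diag (M : Matrix (Fin k) (Fin k) F) (h : IsUpperUnip M) (i : Fin k) :
    M⁻¹ i i = 1 := by
  obtain ⟨hup, hdiag⟩ := h
  have hd : ∀ i, M i i ≠ 0 := fun i => by rw [hdiag]; exact one_ne_zero
  have hinvup := upT_inv M hup hd
  have hMW : M * M⁻¹ = 1 := Matrix.mul_nonsing_inv M (upT_isUnit_det M hup hd)
  have h1 : (M * M⁻¹) i i = (1 : Matrix (Fin k) (Fin k) F) i i := by rw [hMW]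
  rw [Matrix.mul_apply, Matrix.one_apply_eq,
    Finset.sum_eq_single_of_mem i (Finset.mem_univ _)] at h1
  · rwa [hdiag, one_mul] at h1
  · intro b _ hb
    rcases lt_or_gt_of_ne hb with hbi | hbi
    · rw [hup i b hbi, zero_mul]
    · rw [hinvup b i hbi, mul_zero]

lemma unip_inv_superdiag (M : Matrix (Fin k) (Fin k) F) (h : IsUpperUnip M)
    (i : ℕ) (h1 : i + 1 < k) :
    M⁻¹ ⟨i, by omega⟩ ⟨i + 1, h1⟩ = - M ⟨i, by omega⟩ ⟨i + 1, h1⟩ := by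
  obtain ⟨hup, hdiag⟩ := h
  have hd : ∀ i, M i i ≠ 0 := fun i => by rw [hdiag]; exact one_ne_zero
  have hinvup := upT_inv M hup hd
  have hMW : M * M⁻¹ = 1 := Matrix.mul_nonsing_inv M (upT_isUnit_det M hup hd)
  set a : Fin k := ⟨i, by omega⟩
  set b : Fin k := ⟨i + 1, h1⟩
  have hab : a ≠ b := by simp [a, b, Fin.ext_iff]
  have h2 : (M * M⁻¹) a b = (1 : Matrix (Fin k) (Fin k) F) a b := by rw [hMW]
  rw [Matrix.mul_apply, Matrix.one_apply_ne hab,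
    Finset.sum_eq_add_of_mem a b (Finset.mem_univ _) (Finset.mem_univ _) hab] at h2
  · rw [hdiag, one_mul, unip_inv_diag M ⟨hup, hdiag⟩ b, mul_one] at h2
    linear_combination h2
  · intro c _ hc
    rcases lt_trichotomy c a with hca | hca | hca
    · rw [hup a c hca, zero_mul]
    · exact absurd hca hc.1
    · have hcb : b < c := by
        rw [Fin.lt_def] at hca ⊢
        have hne : (c : ℕ) ≠ i + 1 := fun h => hc.2 (Fin.ext h)
        show (i + 1) < (c : ℕ)
        have hic : (i : ℕ) < (c : ℕ) := hca
        omega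
      rw [hinvup c b hcb, mul_zero]

lemma loT_mul_loT (A B : Matrix (Fin k) (Fin k) F)
    (hA : ∀ i j : Fin k, i < j → A i j = 0) (hB : ∀ i j : Fin k, i < j → B i j = 0) :
    ∀ i j : Fin k, i < j → (A * B) i j = 0 := by
  intro i j hij
  rw [Matrix.mul_apply]
  refine Finset.sum_eq_zero fun c _ => ?_
  rcases lt_or_ge (i : ℕ) (c : ℕ) with h | h
  · rw [hA i c h, zero_mul]
  · rw [hB c j (lt_of_le_of_lt (by exact h) hij), mul_zero]

lemma upT_mul_upT (A B : Matrix (Fin k) (Fin k) F)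
    (hA : ∀ i j : Fin k, j < i → A i j = 0) (hB : ∀ i j : Fin k, j < i → B i j = 0) :
    ∀ i j : Fin k, j < i → (A * B) i j = 0 := by
  intro i j hij
  rw [Matrix.mul_apply]
  refine Finset.sum_eq_zero fun c _ => ?_
  rcases lt_or_ge (c : ℕ) (i : ℕ) with h | h
  · rw [hA i c h, zero_mul]
  · rw [hB c j (lt_of_lt_of_le hij (by exact h)), mul_zero]

lemma mul_diag_apply (A B : Matrix (Fin k) (Fin k) F)
    (hA : ∀ i j : Fin k, j < i → A i j = 0) (hB : ∀ i j : Fin k, j < i → B i j = 0)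
    (i : Fin k) : (A * B) i i = A i i * B i i := by
  rw [Matrix.mul_apply, Finset.sum_eq_single_of_mem i (Finset.mem_univ _)]
  intro c _ hc
  rcases lt_or_gt_of_ne hc with h | h
  · rw [hA i c h, zero_mul]
  · rw [hB c i h, mul_zero]

end Tri

lemma jm_diag {p : ℕ} [hp : Fact p.Prime] {n m : ℕ} {x : Matrix (Fin n) (Fin n) ℚ_[p]}
    (hx : x ∈ Jm p n m) (i : Fin n) : ‖x i i - 1‖ ≤ (p : ℝ) ^ (-(m : ℤ)) := by
  obtain ⟨k, hk, rfl⟩ := hx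
  have hp0 : (p : ℚ_[p]) ≠ 0 := Nat.cast_ne_zero.mpr hp.out.ne_zero
  have hent : (dpow p n (m : ℤ) * k * dpow p n (-(m : ℤ))) i i = k i i := by
    simp only [dpow, Matrix.mul_diagonal, Matrix.diagonal_mul]
    rw [mul_comm, ← mul_assoc, ← zpow_add₀ hp0]
    norm_num
  simp only []
  rw [hent]
  have := hk i i
  rwa [Matrix.one_apply_eq] at this

lemma jm_diag_ne_zero {p : ℕ} [hp : Fact p.Prime] {n m : ℕ} (hm : 1 ≤ m)
    {x : Matrix (Fin n) (Fin n) ℚ_[p]}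
    (hx : x ∈ Jm p n m) (i : Fin n) : x i i ≠ 0 := by
  intro h0
  have h := jm_diag hx i
  rw [h0, zero_sub, norm_neg, norm_one] at h
  have hp1 : (1 : ℝ) < (p : ℝ) := by exact_mod_cast hp.out.one_lt
  have : (p : ℝ) ^ (-(m : ℤ)) < 1 := by
    apply zpow_lt_one_of_neg₀ hp1
    omega
  linarith

/-- If `j = b̄₁ n₁` and `ω_n ᵗj⁻¹ ω_n = b̄₂ n₂` are the Iwahori decompositions
(`b̄ᵢ ∈ B̄_m` lower triangular in `J_m`, `nᵢ ∈ N_m` upper unipotent in `J_m`),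
then `ψ_m(ω_n ᵗj⁻¹ ω_n) = ψ_m(j)⁻¹`, where `ψ_m` is evaluated via the superdiagonal
sum of the `N_m`-component and `ψ` is an additive character with conductor `ℤ_p`. -/
theorem stmt_7 (p : ℕ) [Fact p.Prime] (n m : ℕ) (hn : 1 ≤ n) (hm : 1 ≤ m)
    (ψ : AddChar ℚ_[p] ℂ)
    (hψ₁ : ∀ x : ℚ_[p], ‖x‖ ≤ 1 → ψ x = 1)
    (hψ₂ : ∃ x : ℚ_[p], ‖x‖ ≤ (p : ℝ) ∧ ψ x ≠ 1)
    (j b₁ n₁ b₂ n₂ : Matrix (Fin n) (Fin n) ℚ_[p])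
    (hj : j ∈ Jm p n m)
    (hb₁ : b₁ ∈ Jm p n m) (hb₁low : ∀ i k : Fin n, i < k → b₁ i k = 0)
    (hn₁ : n₁ ∈ Jm p n m) (hn₁up : IsUpperUnip n₁)
    (hdec₁ : j = b₁ * n₁)
    (hb₂ : b₂ ∈ Jm p n m) (hb₂low : ∀ i k : Fin n, i < k → b₂ i k = 0)
    (hn₂ : n₂ ∈ Jm p n m) (hn₂up : IsUpperUnip n₂)
    (hdec₂ : antidiag ℚ_[p] n * (j⁻¹)ᵀ * antidiag ℚ_[p] n = b₂ * n₂) :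
    ψ (∑ i : Fin (n - 1), n₂ ⟨i.1, by omega⟩ ⟨i.1 + 1, by omega⟩) =
      (ψ (∑ i : Fin (n - 1), n₁ ⟨i.1, by omega⟩ ⟨i.1 + 1, by omega⟩))⁻¹ := by
  classical
  set ω : Matrix (Fin n) (Fin n) ℚ_[p] := antidiag ℚ_[p] n with hωdef
  have hωω : ω * ω = 1 := antidiag_mul_antidiag
  -- invertibility facts
  have hn₁d : ∀ i, n₁ i i ≠ 0 := fun i => by rw [hn₁up.2]; exact one_ne_zero
  have hn₂d : ∀ i, n₂ i i ≠ 0 := fun i => by rw [hn₂up.2]; exact one_ne_zero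
  have hn₂det : IsUnit n₂.det := upT_isUnit_det n₂ hn₂up.1 hn₂d
  have hb₁diag : ∀ i, b₁ i i ≠ 0 := jm_diag_ne_zero hm hb₁
  have hb₁det : IsUnit b₁.det := by
    rw [Matrix.det_of_lowerTriangular b₁ (fun i j h => hb₁low i j h)]
    exact isUnit_iff_ne_zero.mpr (Finset.prod_ne_zero_iff.mpr fun i _ => hb₁diag i)
  have hbinv : b₁⁻¹ * b₁ = 1 := Matrix.nonsing_inv_mul b₁ hb₁det
  -- the decomposition of ω ᵗj⁻¹ ω
  set u : Matrix (Fin n) (Fin n) ℚ_[p] := ω * (n₁⁻¹)ᵀ * ω with hudef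
  set Y : Matrix (Fin n) (Fin n) ℚ_[p] := ω * b₁ᵀ * ω with hYdef
  have hsplit : b₂ * n₂ = (ω * (b₁⁻¹)ᵀ * ω) * u := by
    rw [← hdec₂, hdec₁, Matrix.mul_inv_rev, Matrix.transpose_mul, hudef]
    simp only [Matrix.mul_assoc]
    rw [show ω * (ω * ((n₁⁻¹)ᵀ * ω)) = (n₁⁻¹)ᵀ * ω by
      rw [← Matrix.mul_assoc, hωω, Matrix.one_mul]]
  have hYX : Y * (ω * (b₁⁻¹)ᵀ * ω) = 1 := by
    have h1 : b₁ᵀ * (b₁⁻¹)ᵀ = 1 := by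
      rw [← Matrix.transpose_mul, hbinv, Matrix.transpose_one]
    rw [hYdef]
    simp only [Matrix.mul_assoc]
    rw [show ω * (ω * ((b₁⁻¹)ᵀ * ω)) = (b₁⁻¹)ᵀ * ω by
      rw [← Matrix.mul_assoc, hωω, Matrix.one_mul]]
    rw [← Matrix.mul_assoc b₁ᵀ, h1, Matrix.one_mul, hωω]
  have hu_eq : u = (Y * b₂) * n₂ := by
    have h := congrArg (fun z => Y * z) hsplit
    rw [← Matrix.mul_assoc, ← Matrix.mul_assoc, hYX, Matrix.one_mul] at h
    exact h.symm
  set L : Matrix (Fin n) (Fin n) ℚ_[p] := Y * b₂ with hLdef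
  -- L is lower triangular
  have hYlow : ∀ i j : Fin n, i < j → Y i j = 0 := by
    intro i j hij
    rw [hYdef, hωdef, antidiag_conj_apply, Matrix.transpose_apply]
    exact hb₁low _ _ (Fin.rev_lt_rev.mpr hij)
  have hLlow : ∀ i j : Fin n, i < j → L i j = 0 := loT_mul_loT Y b₂ hYlow hb₂low
  -- u is upper unipotent
  have hn₁invup := upT_inv n₁ hn₁up.1 hn₁d
  have huup : ∀ i j : Fin n, j < i → u i j = 0 := by
    intro i j hij
    rw [hudef, hωdef, antidiag_conj_apply, Matrix.transpose_apply]
    exact hn₁invup _ _ (Fin.rev_lt_rev.mpr hij)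
  have hudiag : ∀ i : Fin n, u i i = 1 := by
    intro i
    rw [hudef, hωdef, antidiag_conj_apply, Matrix.transpose_apply]
    exact unip_inv_diag n₁ hn₁up i.rev
  -- n₂⁻¹ is upper unipotent
  have hn₂invup := upT_inv n₂ hn₂up.1 hn₂d
  have hn₂invdiag := unip_inv_diag n₂ hn₂up
  have hL_eq : L = u * n₂⁻¹ := by
    rw [hu_eq, Matrix.mul_assoc, Matrix.mul_nonsing_inv n₂ hn₂det, Matrix.mul_one, hLdef]
  have hLup : ∀ i j : Fin n, j < i → L i j = 0 := by
    rw [hL_eq]; exact upT_mul_upT u n₂⁻¹ huup hn₂invup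
  have hLdiag : ∀ i : Fin n, L i i = 1 := by
    intro i
    rw [hL_eq, mul_diag_apply u n₂⁻¹ huup hn₂invup, hudiag, hn₂invdiag, one_mul]
  have hL1 : L = 1 := by
    ext i j
    rcases lt_trichotomy i j with h | rfl | h
    · rw [hLlow i j h, Matrix.one_apply_ne (ne_of_lt h)]
    · rw [hLdiag, Matrix.one_apply_eq]
    · rw [hLup i j h, Matrix.one_apply_ne (ne_of_gt h)]
  have hn₂u : n₂ = u := by rw [hu_eq, hL1, Matrix.one_mul]
  -- final computation
  have key : ∀ i : Fin (n - 1),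
      u ⟨i.1, by omega⟩ ⟨i.1 + 1, by omega⟩
        = -(n₁ ⟨n - 2 - i.1, by omega⟩ ⟨(n - 2 - i.1) + 1, by omega⟩) := by
    intro i
    rw [hudef, hωdef, antidiag_conj_apply, Matrix.transpose_apply]
    have e1 : Fin.rev (⟨i.1 + 1, by omega⟩ : Fin n) = ⟨n - 2 - i.1, by omega⟩ :=
      Fin.ext (by simp [Fin.val_rev]; omega)
    have e2 : Fin.rev (⟨i.1, by omega⟩ : Fin n) = ⟨(n - 2 - i.1) + 1, by omega⟩ :=
      Fin.ext (by simp [Fin.val_rev]; omega)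
    rw [e1, e2]
    exact unip_inv_superdiag n₁ hn₁up (n - 2 - i.1) (by omega)
  have hsum : (∑ i : Fin (n - 1), n₂ ⟨i.1, by omega⟩ ⟨i.1 + 1, by omega⟩)
      = -(∑ i : Fin (n - 1), n₁ ⟨i.1, by omega⟩ ⟨i.1 + 1, by omega⟩) := by
    rw [hn₂u]
    calc (∑ i : Fin (n - 1), u ⟨i.1, by omega⟩ ⟨i.1 + 1, by omega⟩)
        = ∑ i : Fin (n - 1),
            -(n₁ ⟨n - 2 - i.1, by omega⟩ ⟨(n - 2 - i.1) + 1, by omega⟩) :=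
          Finset.sum_congr rfl (fun i _ => key i)
      _ = ∑ i : Fin (n - 1), -(n₁ ⟨i.1, by omega⟩ ⟨i.1 + 1, by omega⟩) := by
          apply Fintype.sum_equiv Fin.revPerm
          intro x
          have ha : (⟨n - 2 - x.1, by omega⟩ : Fin n) = ⟨(Fin.revPerm x : Fin (n-1)).1, by omega⟩ := by
            apply Fin.ext
            have := x.isLt
            simp [Fin.val_rev]
            omega
          have hb : (⟨(n - 2 - x.1) + 1, by omega⟩ : Fin n)
              = ⟨(Fin.revPerm x : Fin (n-1)).1 + 1, by omega⟩ := by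
            apply Fin.ext
            have := x.isLt
            simp [Fin.val_rev]
            omega
          rw [ha, hb]
      _ = -(∑ i : Fin (n - 1), n₁ ⟨i.1, by omega⟩ ⟨i.1 + 1, by omega⟩) := by
          rw [Finset.sum_neg_distrib]
  rw [hsum, AddChar.map_neg_eq_inv]
end

section
/- Let F be a nonarchimedean local field with maximal ideal p and uniformizer ϖ, m ≥ 1, n ≥ 1, d = diag(1, ϖ², ..., ϖ^{2n-2}), and J_m = d^m (I + M_n(p^m)) d^{-m}. Set N_m = N_n ∩ J_m, A_m = A_n ∩ J_m, N̄_m = N̄_n ∩ J_m, B̄_m = (N̄_n A_n) ∩ J_m. Then J_m admits the Iwahori factorizations J_m = N̄_m A_m N_m = B̄_m N_m = N_m B̄_m, and the expression j = b̄ n with b̄ ∈ B̄_m, n ∈ N_m is unique. -/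
open Matrix

/-- Lower triangular unipotent matrix. -/
def IsLowerUnip {F : Type*} [Zero F] [One F] {k : ℕ} (M : Matrix (Fin k) (Fin k) F) : Prop :=
  (∀ i j : Fin k, i < j → M i j = 0) ∧ ∀ i, M i i = 1

/-- Lower triangular matrix. -/
def IsLowerTri {F : Type*} [Zero F] {k : ℕ} (M : Matrix (Fin k) (Fin k) F) : Prop :=
  ∀ i j : Fin k, i < j → M i j = 0

/-- Diagonal matrix. -/
def IsDiagMat {F : Type*} [Zero F] {k : ℕ} (M : Matrix (Fin k) (Fin k) F) : Prop :=
  ∀ i j : Fin k, i ≠ j → M i j = 0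

namespace Stmt13

open Finset

variable {p : ℕ} [Fact p.Prime] {n m : ℕ}

/-- The weight bound for the `(i,j)` entry of elements of `J_m`. -/
noncomputable def w (p n m : ℕ) (i j : Fin n) : ℝ :=
  (p : ℝ) ^ (-(m : ℤ) * (1 + 2 * ((i : ℤ) - (j : ℤ))))

lemma one_lt_p : (1 : ℝ) < p := by exact_mod_cast (Fact.out : p.Prime).one_lt
lemma p_pos : (0 : ℝ) < p := lt_trans one_pos one_lt_p
lemma pQ_ne : (p : ℚ_[p]) ≠ 0 := by exact_mod_cast (Fact.out : p.Prime).ne_zero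
lemma pR_ne : (p : ℝ) ≠ 0 := ne_of_gt p_pos

lemma w_pos (i j : Fin n) : 0 < w p n m i j := zpow_pos p_pos _
lemma w_nonneg (i j : Fin n) : 0 ≤ w p n m i j := (w_pos i j).le

lemma w_mul_le (i l j : Fin n) : w p n m i l * w p n m l j ≤ w p n m i j := by
  unfold w
  rw [← zpow_add₀ pR_ne]
  apply zpow_le_zpow_right₀ one_lt_p.le
  nlinarith [Int.ofNat_nonneg m]

lemma w_diag (hm : 1 ≤ m) (i : Fin n) : w p n m i i < 1 := by
  unfold w
  apply zpow_lt_one_of_neg₀ one_lt_p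
  omega

/-- Entrywise description of membership in `J_m`. -/
def memS (p : ℕ) [Fact p.Prime] (n m : ℕ) (g : Matrix (Fin n) (Fin n) ℚ_[p]) : Prop :=
  ∀ i j, ‖g i j - (if i = j then 1 else 0)‖ ≤ w p n m i j

lemma norm_sub_max (q r : ℚ_[p]) : ‖q - r‖ ≤ max ‖q‖ ‖r‖ := by
  rw [sub_eq_add_neg]
  simpa using Padic.nonarchimedean q (-r)

lemma ultra_sum_le {ι : Type*} [DecidableEq ι] (s : Finset ι) (f : ι → ℚ_[p]) {C : ℝ}
    (hC : 0 ≤ C) (h : ∀ i ∈ s, ‖f i‖ ≤ C) : ‖∑ i ∈ s, f i‖ ≤ C := by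
  induction s using Finset.induction with
  | empty => simpa
  | @insert a t ha ih =>
      rw [Finset.sum_insert ha]
      exact le_trans (Padic.nonarchimedean _ _)
        (max_le (h a (mem_insert_self a t)) (ih fun i hi => h i (mem_insert_of_mem hi)))

lemma norm_eq_one_of (a : ℚ_[p]) (h : ‖a - 1‖ < 1) : ‖a‖ = 1 := by
  have : a = 1 + (a - 1) := by ring
  rw [this, Padic.add_eq_max_of_ne]
  · simp
    linarith [h]
  · simp only [norm_one]
    intro hcon
    rw [← hcon] at h
    linarith

lemma dpow_mul_dpow (s : ℤ) : dpow p n s * dpow p n (-s) = 1 := by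
  unfold dpow
  rw [diagonal_mul_diagonal]
  convert (Matrix.diagonal_one (n := Fin n)) using 2
  funext i
  rw [← zpow_add₀ pQ_ne]
  simp

lemma conj_entry (s t : ℤ) (k : Matrix (Fin n) (Fin n) ℚ_[p]) (i j : Fin n) :
    (dpow p n s * k * dpow p n t) i j
      = (p:ℚ_[p]) ^ (2*(i:ℤ)*s) * k i j * (p:ℚ_[p]) ^ (2*(j:ℤ)*t) := by
  simp [dpow, Matrix.diagonal_mul, Matrix.mul_diagonal]

lemma conj_sub (s : ℤ) (k : Matrix (Fin n) (Fin n) ℚ_[p]) (i j : Fin n) :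
    (dpow p n s * k * dpow p n (-s)) i j - (if i = j then 1 else 0)
      = (p:ℚ_[p]) ^ (2*(i:ℤ)*s) * (k i j - (if i = j then 1 else 0))
          * (p:ℚ_[p]) ^ (2*(j:ℤ)*(-s)) := by
  rw [conj_entry]
  rcases em (i = j) with h | h
  · subst h
    simp only [if_pos rfl]
    have hc : (p:ℚ_[p]) ^ (2*(i:ℤ)*s) * (p:ℚ_[p]) ^ (-(2*(i:ℤ)*s)) = 1 := by
      rw [← zpow_add₀ pQ_ne]
      have : 2*(i:ℤ)*s + -(2*(i:ℤ)*s) = 0 := by ring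
      rw [this, zpow_zero]
    have he : 2*(i:ℤ)*(-s) = -(2*(i:ℤ)*s) := by ring
    rw [he]
    simp only [if_true]
    linear_combination hc
  · simp only [if_neg h]
    ring

lemma Jm_iff (g : Matrix (Fin n) (Fin n) ℚ_[p]) : g ∈ Jm p n m ↔ memS p n m g := by
  constructor
  · rintro ⟨k, hk, rfl⟩
    intro i j
    rw [conj_sub]
    rw [norm_mul, norm_mul, Padic.norm_p_zpow, Padic.norm_p_zpow]
    have hb : ‖k i j - (if i = j then 1 else 0)‖ ≤ (p:ℝ) ^ (-(m:ℤ)) := by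
      have := hk i j
      rwa [Matrix.one_apply] at this
    calc (p:ℝ)^(-(2*(i:ℤ)*m)) * ‖k i j - (if i = j then 1 else 0)‖ * (p:ℝ)^(-(2*(j:ℤ)*(-(m:ℤ))))
        ≤ (p:ℝ)^(-(2*(i:ℤ)*m)) * (p:ℝ)^(-(m:ℤ)) * (p:ℝ)^(-(2*(j:ℤ)*(-(m:ℤ)))) := by
          gcongr <;> positivity
      _ = w p n m i j := by
          rw [← zpow_add₀ pR_ne, ← zpow_add₀ pR_ne]
          unfold w
          congr 1
          ring
  · intro hg
    refine ⟨dpow p n (-(m:ℤ)) * g * dpow p n (m:ℤ), ?_, ?_⟩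
    · intro i j
      rw [Matrix.one_apply]
      have : dpow p n (m:ℤ) = dpow p n (-(-(m:ℤ))) := by norm_num
      rw [this, conj_sub, norm_mul, norm_mul, Padic.norm_p_zpow, Padic.norm_p_zpow]
      have hb := hg i j
      calc (p:ℝ)^(-(2*(i:ℤ)*(-(m:ℤ)))) * ‖g i j - (if i = j then 1 else 0)‖
              * (p:ℝ)^(-(2*(j:ℤ)*(-(-(m:ℤ)))))
          ≤ (p:ℝ)^(-(2*(i:ℤ)*(-(m:ℤ)))) * w p n m i j * (p:ℝ)^(-(2*(j:ℤ)*(-(-(m:ℤ))))) := by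
            gcongr <;> positivity
        _ = (p:ℝ) ^ (-(m:ℤ)) := by
            unfold w
            rw [← zpow_add₀ pR_ne, ← zpow_add₀ pR_ne]
            congr 1
            ring
    · show dpow p n (m:ℤ) * (dpow p n (-(m:ℤ)) * g * dpow p n (m:ℤ)) * dpow p n (-(m:ℤ)) = g
      rw [show dpow p n (m:ℤ) * (dpow p n (-(m:ℤ)) * g * dpow p n (m:ℤ)) * dpow p n (-(m:ℤ))
          = (dpow p n (m:ℤ) * dpow p n (-(m:ℤ))) * g * (dpow p n (m:ℤ) * dpow p n (-(m:ℤ))) by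
            noncomm_ring]
      rw [dpow_mul_dpow]
      simp

/-- entry norms of elements of a set described by `memS` -/
lemma memS_norm_le (hm : 1 ≤ m) {g : Matrix (Fin n) (Fin n) ℚ_[p]} (hg : memS p n m g)
    (i j : Fin n) : ‖g i j‖ ≤ if i = j then 1 else w p n m i j := by
  rcases em (i = j) with h | h
  · subst h
    rw [if_pos rfl]
    have h1 := hg i i
    rw [if_pos rfl] at h1
    have : g i i = 1 + (g i i - 1) := by ring
    rw [this]
    refine le_trans (Padic.nonarchimedean _ _) (max_le (by simp) ?_)
    exact le_trans h1 (w_diag hm i).le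
  · rw [if_neg h]
    have h1 := hg i j
    rwa [if_neg h, sub_zero] at h1

lemma memS_diag_norm (hm : 1 ≤ m) {g : Matrix (Fin n) (Fin n) ℚ_[p]} (hg : memS p n m g)
    (i : Fin n) : ‖g i i‖ = 1 := by
  apply norm_eq_one_of
  have h1 := hg i i
  rw [if_pos rfl] at h1
  exact lt_of_le_of_lt h1 (w_diag hm i)

lemma memS_diag_ne (hm : 1 ≤ m) {g : Matrix (Fin n) (Fin n) ℚ_[p]} (hg : memS p n m g)
    (i : Fin n) : g i i ≠ 0 := by
  intro h
  have := memS_diag_norm hm hg i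
  rw [h, norm_zero] at this
  norm_num at this

/-- `memS` is stable under products. -/
lemma memS_mul (hm : 1 ≤ m) {g h : Matrix (Fin n) (Fin n) ℚ_[p]}
    (hg : memS p n m g) (hh : memS p n m h) : memS p n m (g * h) := by
  intro i j
  have e1 : ∑ l : Fin n, (if i = l then (1:ℚ_[p]) else 0) * h l j = h i j := by
    simp [Finset.sum_ite_eq]
  have expand : (g * h) i j - (if i = j then 1 else 0)
      = (∑ l : Fin n, (g i l - (if i = l then 1 else 0)) * h l j)
          + (h i j - (if i = j then 1 else 0)) := by
    simp only [sub_mul, Finset.sum_sub_distrib, Matrix.mul_apply, e1]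
    ring
  rw [expand]
  refine le_trans (Padic.nonarchimedean _ _) (max_le ?_ (hh i j))
  apply ultra_sum_le _ _ (w_nonneg _ _)
  intro l _
  rw [norm_mul]
  calc ‖g i l - (if i = l then 1 else 0)‖ * ‖h l j‖
      ≤ w p n m i l * (if l = j then 1 else w p n m l j) := by
        refine mul_le_mul (hg i l) (memS_norm_le hm hh l j) (norm_nonneg _) (w_nonneg _ _)
    _ ≤ w p n m i j := by
        rcases em (l = j) with h' | h'
        · subst h'
          rw [if_pos rfl, mul_one]
        · rw [if_neg h']
          exact w_mul_le i l j

/-- Entries of the LU factorization, defined by the Doolittle recursion. -/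
noncomputable def luEnt (g : Matrix (Fin n) (Fin n) ℚ_[p]) (i j : Fin n) : ℚ_[p] :=
  if h0 : (j : ℕ) ≤ i then
    g i j - ∑ l : Fin n, if h : (l : ℕ) < j then luEnt g i l * luEnt g l j else 0
  else
    (g i j - ∑ l : Fin n, if h : (l : ℕ) < i then luEnt g i l * luEnt g l j else 0) / luEnt g i i
termination_by min (2 * (j : ℕ)) (2 * (i : ℕ) + 1)
decreasing_by all_goals omega

lemma luEnt_lower (g : Matrix (Fin n) (Fin n) ℚ_[p]) {i j : Fin n} (hij : (j : ℕ) ≤ i) :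
    luEnt g i j = g i j - ∑ l : Fin n,
      if (l : ℕ) < j then luEnt g i l * luEnt g l j else 0 := by
  rw [luEnt, dif_pos hij]
  simp only [dite_eq_ite]

lemma luEnt_upper (g : Matrix (Fin n) (Fin n) ℚ_[p]) {i j : Fin n} (hij : (i : ℕ) < j) :
    luEnt g i j = (g i j - ∑ l : Fin n,
      if (l : ℕ) < i then luEnt g i l * luEnt g l j else 0) / luEnt g i i := by
  rw [luEnt, dif_neg (by omega)]
  simp only [dite_eq_ite]

/-- The key norm bound on LU entries. -/
lemma luEnt_norm (hm : 1 ≤ m) {g : Matrix (Fin n) (Fin n) ℚ_[p]} (hg : memS p n m g)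
    (i j : Fin n) : ‖luEnt g i j - (if i = j then 1 else 0)‖ ≤ w p n m i j := by
  suffices H : ∀ t : ℕ, ∀ i j : Fin n, min (2 * (j:ℕ)) (2 * (i:ℕ) + 1) ≤ t →
      ‖luEnt g i j - (if i = j then 1 else 0)‖ ≤ w p n m i j from H _ i j le_rfl
  intro t
  induction t using Nat.strong_induction_on with
  | _ t IH =>
    intro i j ht
    rcases le_or_gt (j:ℕ) (i:ℕ) with hij | hij
    · -- lower-triangular part
      rw [luEnt_lower g hij, sub_right_comm]
      refine le_trans (norm_sub_max _ _) (max_le (hg i j) ?_)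
      apply ultra_sum_le _ _ (w_nonneg _ _)
      intro l _
      by_cases hl : (l:ℕ) < j
      · rw [if_pos hl, norm_mul]
        have h1 : ‖luEnt g i l‖ ≤ w p n m i l := by
          have := IH (min (2 * (l:ℕ)) (2 * (i:ℕ) + 1)) (by omega) i l le_rfl
          rwa [if_neg (by intro h; subst h; omega), sub_zero] at this
        have h2 : ‖luEnt g l j‖ ≤ w p n m l j := by
          have := IH (min (2 * (j:ℕ)) (2 * (l:ℕ) + 1)) (by omega) l j le_rfl
          rwa [if_neg (by intro h; subst h; omega), sub_zero] at this
        calc ‖luEnt g i l‖ * ‖luEnt g l j‖ ≤ w p n m i l * w p n m l j :=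
              mul_le_mul h1 h2 (norm_nonneg _) (w_nonneg _ _)
          _ ≤ w p n m i j := w_mul_le i l j
      · rw [if_neg hl, norm_zero]
        exact w_nonneg _ _
    · -- strictly upper part
      have hdiag : ‖luEnt g i i‖ = 1 := by
        apply norm_eq_one_of
        have := IH (min (2 * (i:ℕ)) (2 * (i:ℕ) + 1)) (by omega) i i le_rfl
        rw [if_pos rfl] at this
        exact lt_of_le_of_lt this (w_diag hm i)
      rw [luEnt_upper g hij, if_neg (by intro h; subst h; omega), sub_zero, norm_div, hdiag,
        div_one]
      have hgij : ‖g i j‖ ≤ w p n m i j := by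
        have := hg i j
        rwa [if_neg (by intro h; subst h; omega), sub_zero] at this
      refine le_trans (norm_sub_max _ _) (max_le hgij ?_)
      apply ultra_sum_le _ _ (w_nonneg _ _)
      intro l _
      by_cases hl : (l:ℕ) < i
      · rw [if_pos hl, norm_mul]
        have h1 : ‖luEnt g i l‖ ≤ w p n m i l := by
          have := IH (min (2 * (l:ℕ)) (2 * (i:ℕ) + 1)) (by omega) i l le_rfl
          rwa [if_neg (by intro h; subst h; omega), sub_zero] at this
        have h2 : ‖luEnt g l j‖ ≤ w p n m l j := by
          have := IH (min (2 * (j:ℕ)) (2 * (l:ℕ) + 1)) (by omega) l j le_rfl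
          rwa [if_neg (by intro h; subst h; omega), sub_zero] at this
        calc ‖luEnt g i l‖ * ‖luEnt g l j‖ ≤ w p n m i l * w p n m l j :=
              mul_le_mul h1 h2 (norm_nonneg _) (w_nonneg _ _)
          _ ≤ w p n m i j := w_mul_le i l j
      · rw [if_neg hl, norm_zero]
        exact w_nonneg _ _

lemma luEnt_diag_ne (hm : 1 ≤ m) {g : Matrix (Fin n) (Fin n) ℚ_[p]} (hg : memS p n m g)
    (i : Fin n) : luEnt g i i ≠ 0 := by
  have h1 := luEnt_norm hm hg i i
  rw [if_pos rfl] at h1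
  have : ‖luEnt g i i‖ = 1 := norm_eq_one_of _ (lt_of_le_of_lt h1 (w_diag hm i))
  intro h
  rw [h, norm_zero] at this
  norm_num at this

/-- The lower-triangular factor. -/
noncomputable def lLU (g : Matrix (Fin n) (Fin n) ℚ_[p]) : Matrix (Fin n) (Fin n) ℚ_[p] :=
  Matrix.of fun i j => if (j : ℕ) ≤ i then luEnt g i j else 0

/-- The upper-unipotent factor. -/
noncomputable def uLU (g : Matrix (Fin n) (Fin n) ℚ_[p]) : Matrix (Fin n) (Fin n) ℚ_[p] :=
  Matrix.of fun i j => if (i : ℕ) < j then luEnt g i j else if i = j then 1 else 0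

lemma lLU_lowerTri (g : Matrix (Fin n) (Fin n) ℚ_[p]) : IsLowerTri (lLU g) := by
  intro i j hij
  rw [Fin.lt_def] at hij
  exact if_neg (by omega)

lemma uLU_upperUnip (g : Matrix (Fin n) (Fin n) ℚ_[p]) : IsUpperUnip (uLU g) := by
  constructor
  · intro i j hij
    rw [Fin.lt_def] at hij
    show (if (i:ℕ) < j then _ else if i = j then (1:ℚ_[p]) else 0) = 0
    rw [if_neg (by omega), if_neg (by intro h; subst h; omega)]
  · intro i
    show (if (i:ℕ) < i then _ else if i = i then (1:ℚ_[p]) else 0) = 1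
    rw [if_neg (by omega), if_pos rfl]

lemma lLU_memS (hm : 1 ≤ m) {g : Matrix (Fin n) (Fin n) ℚ_[p]} (hg : memS p n m g) :
    memS p n m (lLU g) := by
  intro i j
  show ‖(if (j:ℕ) ≤ i then luEnt g i j else 0) - _‖ ≤ _
  by_cases hij : (j:ℕ) ≤ i
  · rw [if_pos hij]
    exact luEnt_norm hm hg i j
  · rw [if_neg hij, if_neg (by intro h; subst h; omega), sub_zero, norm_zero]
    exact w_nonneg _ _

lemma uLU_memS (hm : 1 ≤ m) {g : Matrix (Fin n) (Fin n) ℚ_[p]} (hg : memS p n m g) :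
    memS p n m (uLU g) := by
  intro i j
  show ‖(if (i:ℕ) < j then luEnt g i j else if i = j then 1 else 0) - _‖ ≤ _
  by_cases hij : (i:ℕ) < j
  · rw [if_pos hij]
    exact luEnt_norm hm hg i j
  · rw [if_neg hij]
    rcases em (i = j) with h | h
    · simp [h, w_nonneg]
    · simp [h, w_nonneg]

/-- The LU factorization identity. -/
lemma lu_mul (hm : 1 ≤ m) {g : Matrix (Fin n) (Fin n) ℚ_[p]} (hg : memS p n m g) :
    lLU g * uLU g = g := by
  ext i j
  rw [Matrix.mul_apply]
  rcases le_or_gt (j:ℕ) (i:ℕ) with hij | hij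
  · have key : ∀ l : Fin n, lLU g i l * uLU g l j
        = (if (l:ℕ) < j then luEnt g i l * luEnt g l j else 0)
          + (if l = j then luEnt g i j else 0) := by
      intro l
      show (if (l:ℕ) ≤ i then luEnt g i l else 0) *
          (if (l:ℕ) < j then luEnt g l j else if l = j then 1 else 0) = _
      by_cases h1 : (l:ℕ) < j
      · rw [if_pos h1, if_pos h1, if_pos (by omega : (l:ℕ) ≤ i),
          if_neg (by intro h; subst h; omega), add_zero]
      · by_cases h2 : l = j
        · subst h2
          rw [if_pos rfl, if_neg h1, if_pos rfl, if_neg h1, if_pos hij, zero_add, mul_one]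
        · rw [if_neg h1, if_neg h1, if_neg h2, if_neg h2, mul_zero, add_zero]
    rw [Finset.sum_congr rfl (fun l _ => key l), Finset.sum_add_distrib,
      Finset.sum_ite_eq' Finset.univ j (fun _ => luEnt g i j), if_pos (Finset.mem_univ _),
      luEnt_lower g hij]
    ring
  · have key : ∀ l : Fin n, lLU g i l * uLU g l j
        = (if (l:ℕ) < i then luEnt g i l * luEnt g l j else 0)
          + (if l = i then luEnt g i i * luEnt g i j else 0) := by
      intro l
      show (if (l:ℕ) ≤ i then luEnt g i l else 0) *
          (if (l:ℕ) < j then luEnt g l j else if l = j then 1 else 0) = _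
      by_cases h1 : (l:ℕ) < i
      · rw [if_pos (by omega : (l:ℕ) ≤ i), if_pos (by omega : (l:ℕ) < j), if_pos h1,
          if_neg (by intro h; subst h; omega), add_zero]
      · by_cases h2 : l = i
        · subst h2
          rw [if_pos le_rfl, if_pos hij, if_neg h1, if_pos rfl, zero_add]
        · rw [if_neg (by omega : ¬ (l:ℕ) ≤ i), zero_mul, if_neg h1,
            if_neg h2, add_zero]
    rw [Finset.sum_congr rfl (fun l _ => key l), Finset.sum_add_distrib,
      Finset.sum_ite_eq' Finset.univ i (fun _ => luEnt g i i * luEnt g i j),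
      if_pos (Finset.mem_univ _), luEnt_upper g hij,
      mul_div_cancel₀ _ (luEnt_diag_ne hm hg i)]
    ring

/-- Uniqueness: any LU factorization has entries given by `luEnt`. -/
lemma lu_unique {g b u : Matrix (Fin n) (Fin n) ℚ_[p]} (hfact : b * u = g)
    (hb : IsLowerTri b) (hbd : ∀ i, b i i ≠ 0) (hu : IsUpperUnip u) (i j : Fin n) :
    ((j:ℕ) ≤ i → b i j = luEnt g i j) ∧ ((i:ℕ) < j → u i j = luEnt g i j) := by
  suffices H : ∀ t : ℕ, ∀ i j : Fin n, min (2 * (j:ℕ)) (2 * (i:ℕ) + 1) ≤ t →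
      ((j:ℕ) ≤ i → b i j = luEnt g i j) ∧ ((i:ℕ) < j → u i j = luEnt g i j) from H _ i j le_rfl
  intro t
  induction t using Nat.strong_induction_on with
  | _ t IH =>
    intro i j ht
    constructor
    · intro hij
      have hg : g i j = ∑ l : Fin n, b i l * u l j := by rw [← hfact, Matrix.mul_apply]
      have key : ∀ l : Fin n, b i l * u l j
          = (if (l:ℕ) < j then b i l * u l j else 0) + (if l = j then b i j else 0) := by
        intro l
        by_cases h1 : (l:ℕ) < j
        · rw [if_pos h1, if_neg (by intro h; subst h; omega), add_zero]
        · by_cases h2 : l = j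
          · subst h2
            rw [if_neg h1, if_pos rfl, hu.2, mul_one, zero_add]
          · rw [if_neg h1, if_neg h2, hu.1 l j (by rw [Fin.lt_def]; omega), mul_zero, add_zero]
      have hsum : g i j = (∑ l : Fin n, if (l:ℕ) < j then b i l * u l j else 0) + b i j := by
        rw [hg, Finset.sum_congr rfl (fun l _ => key l), Finset.sum_add_distrib,
          Finset.sum_ite_eq' Finset.univ j (fun _ => b i j), if_pos (Finset.mem_univ _)]
      have hs2 : (∑ l : Fin n, if (l:ℕ) < j then b i l * u l j else 0)
          = ∑ l : Fin n, if (l:ℕ) < j then luEnt g i l * luEnt g l j else 0 := by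
        refine Finset.sum_congr rfl fun l _ => ?_
        by_cases hl : (l:ℕ) < j
        · rw [if_pos hl, if_pos hl,
            (IH (min (2 * (l:ℕ)) (2 * (i:ℕ) + 1)) (by omega) i l le_rfl).1 (by omega),
            (IH (min (2 * (j:ℕ)) (2 * (l:ℕ) + 1)) (by omega) l j le_rfl).2 (by omega)]
        · rw [if_neg hl, if_neg hl]
      rw [luEnt_lower g hij, ← hs2]
      linear_combination -hsum
    · intro hij
      have hg : g i j = ∑ l : Fin n, b i l * u l j := by rw [← hfact, Matrix.mul_apply]
      have key : ∀ l : Fin n, b i l * u l j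
          = (if (l:ℕ) < i then b i l * u l j else 0) + (if l = i then b i i * u i j else 0) := by
        intro l
        by_cases h1 : (l:ℕ) < i
        · rw [if_pos h1, if_neg (by intro h; subst h; omega), add_zero]
        · by_cases h2 : l = i
          · subst h2
            rw [if_neg h1, if_pos rfl, zero_add]
          · rw [if_neg h1, if_neg h2, hb i l (by rw [Fin.lt_def]; omega), zero_mul, zero_add]
      have hsum : g i j = (∑ l : Fin n, if (l:ℕ) < i then b i l * u l j else 0)
          + b i i * u i j := by
        rw [hg, Finset.sum_congr rfl (fun l _ => key l), Finset.sum_add_distrib,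
          Finset.sum_ite_eq' Finset.univ i (fun _ => b i i * u i j), if_pos (Finset.mem_univ _)]
      have hs2 : (∑ l : Fin n, if (l:ℕ) < i then b i l * u l j else 0)
          = ∑ l : Fin n, if (l:ℕ) < i then luEnt g i l * luEnt g l j else 0 := by
        refine Finset.sum_congr rfl fun l _ => ?_
        by_cases hl : (l:ℕ) < i
        · rw [if_pos hl, if_pos hl,
            (IH (min (2 * (l:ℕ)) (2 * (i:ℕ) + 1)) (by omega) i l le_rfl).1 (by omega),
            (IH (min (2 * (j:ℕ)) (2 * (l:ℕ) + 1)) (by omega) l j le_rfl).2 (by omega)]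
        · rw [if_neg hl, if_neg hl]
      have hbii : b i i = luEnt g i i :=
        (IH (min (2 * (i:ℕ)) (2 * (i:ℕ) + 1)) (by omega) i i le_rfl).1 le_rfl
      rw [luEnt_upper g hij, ← hs2, eq_div_iff (by rw [← hbii]; exact hbd i), ← hbii]
      linear_combination -hsum

/-- Antitranspose: reflection in the antidiagonal. It is an anti-automorphism preserving
triangularity type and the weight function. -/
noncomputable def atr (g : Matrix (Fin n) (Fin n) ℚ_[p]) : Matrix (Fin n) (Fin n) ℚ_[p] :=
  Matrix.of fun i j => g (Fin.rev j) (Fin.rev i)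

lemma atr_atr (g : Matrix (Fin n) (Fin n) ℚ_[p]) : atr (atr g) = g := by
  ext i j
  show g (Fin.rev (Fin.rev i)) (Fin.rev (Fin.rev j)) = g i j
  rw [Fin.rev_rev, Fin.rev_rev]

lemma atr_mul (A B : Matrix (Fin n) (Fin n) ℚ_[p]) : atr (A * B) = atr B * atr A := by
  ext i j
  show (A * B) (Fin.rev j) (Fin.rev i) = _
  rw [Matrix.mul_apply, Matrix.mul_apply]
  refine Fintype.sum_equiv Fin.revPerm _ _ fun l => ?_
  show A (Fin.rev j) l * B l (Fin.rev i)
      = atr B i (Fin.rev l) * atr A (Fin.rev l) j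
  show A (Fin.rev j) l * B l (Fin.rev i)
      = B (Fin.rev (Fin.rev l)) (Fin.rev i) * A (Fin.rev j) (Fin.rev (Fin.rev l))
  rw [Fin.rev_rev, mul_comm]

lemma w_rev (i j : Fin n) : w p n m (Fin.rev j) (Fin.rev i) = w p n m i j := by
  have h : (((Fin.rev j) : ℕ) : ℤ) - (((Fin.rev i) : ℕ) : ℤ) = ((i:ℕ) : ℤ) - ((j:ℕ) : ℤ) := by
    have hi := i.isLt
    have hj := j.isLt
    rw [Fin.val_rev, Fin.val_rev]
    omega
  unfold w
  rw [h]

lemma atr_memS {g : Matrix (Fin n) (Fin n) ℚ_[p]} (hg : memS p n m g) : memS p n m (atr g) := by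
  intro i j
  show ‖g (Fin.rev j) (Fin.rev i) - _‖ ≤ _
  have hd : (if i = j then (1:ℚ_[p]) else 0) = (if Fin.rev j = Fin.rev i then 1 else 0) := by
    rcases em (i = j) with h | h
    · subst h
      rw [if_pos rfl, if_pos rfl]
    · rw [if_neg h, if_neg (by rw [Fin.rev_inj]; exact fun h' => h h'.symm)]
  rw [hd, ← w_rev i j]
  exact hg (Fin.rev j) (Fin.rev i)

lemma atr_upperUnip {u : Matrix (Fin n) (Fin n) ℚ_[p]} (hu : IsUpperUnip u) :
    IsUpperUnip (atr u) := by
  constructor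
  · intro i j hij
    show u (Fin.rev j) (Fin.rev i) = 0
    exact hu.1 _ _ (Fin.rev_lt_rev.mpr hij)
  · intro i
    show u (Fin.rev i) (Fin.rev i) = 1
    exact hu.2 _

lemma atr_lowerTri {b : Matrix (Fin n) (Fin n) ℚ_[p]} (hb : IsLowerTri b) :
    IsLowerTri (atr b) := by
  intro i j hij
  show b (Fin.rev j) (Fin.rev i) = 0
  exact hb _ _ (Fin.rev_lt_rev.mpr hij)

/-- Splitting a lower-triangular element into unipotent and diagonal parts. -/
lemma split_lower (hm : 1 ≤ m) {b : Matrix (Fin n) (Fin n) ℚ_[p]} (hS : memS p n m b)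
    (hb : IsLowerTri b) :
    ∃ nb a : Matrix (Fin n) (Fin n) ℚ_[p], memS p n m nb ∧ IsLowerUnip nb ∧
      memS p n m a ∧ IsDiagMat a ∧ b = nb * a := by
  refine ⟨Matrix.of fun i j => b i j / b j j, Matrix.diagonal fun i => b i i,
    ?_, ⟨?_, ?_⟩, ?_, ?_, ?_⟩
  · intro i j
    show ‖b i j / b j j - _‖ ≤ _
    rcases em (i = j) with h | h
    · subst h
      rw [if_pos rfl, div_self (memS_diag_ne hm hS i), sub_self, norm_zero]
      exact w_nonneg _ _
    · rw [if_neg h, sub_zero, norm_div, memS_diag_norm hm hS, div_one]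
      have := hS i j
      rwa [if_neg h, sub_zero] at this
  · intro i j hij
    show b i j / b j j = 0
    rw [hb i j hij, zero_div]
  · intro i
    show b i i / b i i = 1
    exact div_self (memS_diag_ne hm hS i)
  · intro i j
    rcases em (i = j) with h | h
    · subst h
      rw [if_pos rfl, Matrix.diagonal_apply_eq]
      have := hS i i
      rwa [if_pos rfl] at this
    · rw [if_neg h, Matrix.diagonal_apply_ne _ h, sub_zero, norm_zero]
      exact w_nonneg _ _
  · intro i j h
    exact Matrix.diagonal_apply_ne _ h
  · ext i j
    rw [Matrix.mul_diagonal]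
    show b i j = b i j / b j j * b j j
    rw [div_mul_cancel₀ _ (memS_diag_ne hm hS j)]

end Stmt13

open Stmt13 in
/-- Iwahori factorization `J_m = N̄_m A_m N_m = B̄_m N_m = N_m B̄_m`, with uniqueness of
the expression `j = b̄ n`, `b̄ ∈ B̄_m`, `n ∈ N_m`. -/
theorem stmt_13 (p : ℕ) [Fact p.Prime] (n m : ℕ) (hn : 1 ≤ n) (hm : 1 ≤ m) :
    (∀ j : Matrix (Fin n) (Fin n) ℚ_[p], j ∈ Jm p n m ↔
      ∃ nb a u : Matrix (Fin n) (Fin n) ℚ_[p],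
        (nb ∈ Jm p n m ∧ IsLowerUnip nb) ∧
        (a ∈ Jm p n m ∧ IsDiagMat a) ∧
        (u ∈ Jm p n m ∧ IsUpperUnip u) ∧ j = nb * a * u) ∧
    (∀ j : Matrix (Fin n) (Fin n) ℚ_[p], j ∈ Jm p n m ↔
      ∃ b u : Matrix (Fin n) (Fin n) ℚ_[p],
        (b ∈ Jm p n m ∧ IsLowerTri b) ∧ (u ∈ Jm p n m ∧ IsUpperUnip u) ∧ j = b * u) ∧
    (∀ j : Matrix (Fin n) (Fin n) ℚ_[p], j ∈ Jm p n m ↔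
      ∃ u b : Matrix (Fin n) (Fin n) ℚ_[p],
        (u ∈ Jm p n m ∧ IsUpperUnip u) ∧ (b ∈ Jm p n m ∧ IsLowerTri b) ∧ j = u * b) ∧
    ∀ b₁ u₁ b₂ u₂ : Matrix (Fin n) (Fin n) ℚ_[p],
      b₁ ∈ Jm p n m → IsLowerTri b₁ → u₁ ∈ Jm p n m → IsUpperUnip u₁ →
      b₂ ∈ Jm p n m → IsLowerTri b₂ → u₂ ∈ Jm p n m → IsUpperUnip u₂ →
      b₁ * u₁ = b₂ * u₂ → b₁ = b₂ ∧ u₁ = u₂ := by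
  have T2 : ∀ j : Matrix (Fin n) (Fin n) ℚ_[p], j ∈ Jm p n m ↔
      ∃ b u : Matrix (Fin n) (Fin n) ℚ_[p],
        (b ∈ Jm p n m ∧ IsLowerTri b) ∧ (u ∈ Jm p n m ∧ IsUpperUnip u) ∧ j = b * u := by
    intro j
    constructor
    · intro hj
      have hS := (Jm_iff j).1 hj
      exact ⟨lLU j, uLU j,
        ⟨(Jm_iff _).2 (lLU_memS hm hS), lLU_lowerTri j⟩,
        ⟨(Jm_iff _).2 (uLU_memS hm hS), uLU_upperUnip j⟩,
        (lu_mul hm hS).symm⟩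
    · rintro ⟨b, u, ⟨hbJ, _⟩, ⟨huJ, _⟩, rfl⟩
      exact (Jm_iff _).2 (memS_mul hm ((Jm_iff _).1 hbJ) ((Jm_iff _).1 huJ))
  refine ⟨?_, T2, ?_, ?_⟩
  · intro j
    constructor
    · intro hj
      obtain ⟨b, u, ⟨hbJ, hbT⟩, ⟨huJ, huU⟩, rfl⟩ := (T2 _).1 hj
      obtain ⟨nb, a, hnbS, hnbU, haS, haD, hba⟩ := split_lower hm ((Jm_iff _).1 hbJ) hbT
      exact ⟨nb, a, u, ⟨(Jm_iff _).2 hnbS, hnbU⟩, ⟨(Jm_iff _).2 haS, haD⟩, ⟨huJ, huU⟩,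
        by rw [hba]⟩
    · rintro ⟨nb, a, u, ⟨hnbJ, _⟩, ⟨haJ, _⟩, ⟨huJ, _⟩, rfl⟩
      exact (Jm_iff _).2 (memS_mul hm
        (memS_mul hm ((Jm_iff _).1 hnbJ) ((Jm_iff _).1 haJ)) ((Jm_iff _).1 huJ))
  · intro j
    constructor
    · intro hj
      have hS' : memS p n m (atr j) := atr_memS ((Jm_iff _).1 hj)
      refine ⟨atr (uLU (atr j)), atr (lLU (atr j)),
        ⟨(Jm_iff _).2 (atr_memS (uLU_memS hm hS')), atr_upperUnip (uLU_upperUnip _)⟩,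
        ⟨(Jm_iff _).2 (atr_memS (lLU_memS hm hS')), atr_lowerTri (lLU_lowerTri _)⟩, ?_⟩
      calc j = atr (atr j) := (atr_atr j).symm
        _ = atr (lLU (atr j) * uLU (atr j)) := by rw [lu_mul hm hS']
        _ = atr (uLU (atr j)) * atr (lLU (atr j)) := atr_mul _ _
    · rintro ⟨u, b, ⟨huJ, _⟩, ⟨hbJ, _⟩, rfl⟩
      exact (Jm_iff _).2 (memS_mul hm ((Jm_iff _).1 huJ) ((Jm_iff _).1 hbJ))
  · intro b₁ u₁ b₂ u₂ hb₁J hb₁T hu₁J hu₁U hb₂J hb₂T hu₂J hu₂U heq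
    have hne₁ : ∀ i, b₁ i i ≠ 0 := memS_diag_ne hm ((Jm_iff _).1 hb₁J)
    have hne₂ : ∀ i, b₂ i i ≠ 0 := memS_diag_ne hm ((Jm_iff _).1 hb₂J)
    have H₁ := fun i j => lu_unique (g := b₁ * u₁) rfl hb₁T hne₁ hu₁U i j
    have H₂ := fun i j => lu_unique (g := b₁ * u₁) heq.symm hb₂T hne₂ hu₂U i j
    constructor
    · ext i j
      rcases le_or_gt (j:ℕ) (i:ℕ) with h | h
      · rw [(H₁ i j).1 h, (H₂ i j).1 h]
      · rw [hb₁T i j (by rw [Fin.lt_def]; exact h), hb₂T i j (by rw [Fin.lt_def]; exact h)]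
    · ext i j
      rcases lt_or_ge (i:ℕ) (j:ℕ) with h | h
      · rw [(H₁ i j).2 h, (H₂ i j).2 h]
      · rcases em (i = j) with h' | h'
        · subst h'
          rw [hu₁U.2, hu₂U.2]
        · have hlt : j < i := by
            rw [Fin.lt_def]
            rcases Nat.lt_or_ge (j:ℕ) (i:ℕ) with h'' | h''
            · exact h''
            · exact absurd (Fin.val_injective (le_antisymm h h'')).symm h'
          rw [hu₁U.1 i j hlt, hu₂U.1 i j hlt]
end
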